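/- For local expert mediators let A_t ⊆ I_t be disjoint sets partitioning I \ I_0 as induced by the optimal joint partition P*, where I_0 is the unique part of P* not contained in any I_t. Then R(P*) ≤ μ(I_0)·v(I_0) + Σ_{j∈Î} s_j + Σ_{t∈M} φ(A_t), where Î = ∪_t I_t, s_j = μ(j) times the second-highest value of item j among bidders, h_j = μ(j) times the highest value, H_i is the set of items for which bidder i has the largest value (ties broken arbitrarily), and φ(S) is the sum of the |B|−1 smallest values among {Σ_{j∈H_i∩S} h_j}_{i∈B}. -/

import Mathlib

open Finset

/-- The second-highest value of `f` over a finite type (0 if fewer than two indices),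
computed as the maximum over pairs of distinct indices of the minimum of the two values. -/
noncomputable def secondMax {B : Type*} [Fintype B] [DecidableEq B] (f : B → ℝ) : ℝ :=
  ((Finset.univ ×ˢ Finset.univ).filter (fun p : B × B => p.1 ≠ p.2)).fold max 0
    (fun p => min (f p.1) (f p.2))

/-- The contribution `μ(S)·v(S)` of a part `S`: the second-highest, over bidders `i`,
of `Σ_{j∈S} μ j · vals i j`. -/
noncomputable def partVal {I B : Type*} [Fintype B] [DecidableEq B]
    (μ : I → ℝ) (vals : B → I → ℝ) (S : Finset I) : ℝ :=
  secondMax (fun i => ∑ j ∈ S, μ j * vals i j)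

/-- The revenue of a collection of parts. -/
noncomputable def revenue {I B : Type*} [Fintype B] [DecidableEq B]
    (μ : I → ℝ) (vals : B → I → ℝ) (P : Finset (Finset I)) : ℝ :=
  ∑ S ∈ P, partVal μ vals S

/-- `P` is a partition of the whole item set. -/
def IsPartition {I : Type*} (P : Finset (Finset I)) : Prop :=
  (∀ j : I, ∃ S ∈ P, j ∈ S) ∧
  (∀ S ∈ P, ∀ T ∈ P, S ≠ T → Disjoint S T) ∧
  (∅ : Finset I) ∉ P

/-- `h_j = μ(j)` times the highest value of item `j` among bidders. -/
noncomputable def hval {I B : Type*} [Fintype B] (μ : I → ℝ) (vals : B → I → ℝ)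
    (j : I) : ℝ :=
  Finset.univ.fold max 0 (fun i : B => μ j * vals i j)

/-- `φ(S)`: with `owner j` the bidder valuing `j` most, the sum of all but the largest
of the per-bidder totals `Σ_{j ∈ H_i ∩ S} h_j`, i.e. the sum of the `|B|-1` smallest. -/
noncomputable def phi {I B : Type*} [Fintype B] [DecidableEq I] [DecidableEq B]
    (μ : I → ℝ) (vals : B → I → ℝ) (owner : I → B) (S : Finset I) : ℝ :=
  (∑ j ∈ S, hval μ vals j) -
    Finset.univ.fold max 0 (fun i : B => ∑ j ∈ S.filter (fun j => owner j = i), hval μ vals j)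


section Aux
variable {I B : Type*} [Fintype B] [DecidableEq B] [DecidableEq I]
variable (μ : I → ℝ) (vals : B → I → ℝ)

lemma foldmax_le {α : Type*} {s : Finset α} {f : α → ℝ} {c : ℝ}
    (h0 : 0 ≤ c) (h : ∀ x ∈ s, f x ≤ c) : s.fold max 0 f ≤ c :=
  (Finset.fold_max_le _).mpr ⟨h0, h⟩

lemma le_foldmax {α : Type*} {s : Finset α} {f : α → ℝ} {x : α} (hx : x ∈ s) :
    f x ≤ s.fold max 0 f :=
  (Finset.le_fold_max _).mpr (Or.inr ⟨x, hx, le_rfl⟩)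

lemma fold_max_nonneg {α : Type*} (s : Finset α) (f : α → ℝ) :
    0 ≤ s.fold max 0 f := (Finset.le_fold_max _).mpr (Or.inl le_rfl)

lemma secondMax_nonneg (f : B → ℝ) : 0 ≤ secondMax f :=
  fold_max_nonneg _ _

lemma secondMax_le {f : B → ℝ} {c : ℝ} (h0 : 0 ≤ c)
    (h : ∀ i1 i2 : B, i1 ≠ i2 → min (f i1) (f i2) ≤ c) : secondMax f ≤ c := by
  refine foldmax_le h0 fun p hp => ?_
  exact h p.1 p.2 (by simpa using (mem_filter.mp hp).2)

lemma le_secondMax {f : B → ℝ} {i1 i2 : B} (hne : i1 ≠ i2) :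
    min (f i1) (f i2) ≤ secondMax f := by
  unfold secondMax
  exact le_foldmax (f := fun p : B × B => min (f p.1) (f p.2)) (x := (i1, i2)) (by simp [hne])

omit [DecidableEq B] [DecidableEq I] in
lemma hval_nonneg (j : I) : 0 ≤ hval μ vals j := fold_max_nonneg _ _

omit [DecidableEq B] [DecidableEq I] in
lemma term_le_hval (i : B) (j : I) : μ j * vals i j ≤ hval μ vals j := by
  unfold hval; exact le_foldmax (f := fun i : B => μ j * vals i j) (mem_univ i)

omit [DecidableEq I] in
lemma partVal_nonneg (S : Finset I) : 0 ≤ partVal μ vals S :=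
  secondMax_nonneg _

omit [DecidableEq I] in
lemma term_le_single (hμ : ∀ j, 0 ≤ μ j)
    (owner : I → B) (howner : ∀ (i : B) (j : I), vals i j ≤ vals (owner j) j)
    {i : B} {j : I} (hne : i ≠ owner j) :
    μ j * vals i j ≤ partVal μ vals {j} := by
  unfold partVal
  refine le_trans ?_ (le_secondMax (f := fun i => ∑ k ∈ ({j} : Finset I), μ k * vals i k) hne)
  simp only [sum_singleton]
  exact le_min le_rfl (mul_le_mul_of_nonneg_left (howner i j) (hμ j))

lemma two_fibers_le (owner : I → B) (S : Finset I) {i i' : B} (hne : i ≠ i') :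
    (∑ j ∈ S.filter (fun j => owner j = i), hval μ vals j) +
      (∑ j ∈ S.filter (fun j => owner j = i'), hval μ vals j) ≤
      ∑ j ∈ S, hval μ vals j := by
  rw [← Finset.sum_union (Finset.disjoint_left.mpr (by
    intro j hj hj'
    simp only [mem_filter] at hj hj'
    exact hne (hj.2 ▸ hj'.2 ▸ rfl)))]
  exact Finset.sum_le_sum_of_subset_of_nonneg
    (Finset.union_subset (filter_subset _ _) (filter_subset _ _))
    (fun j _ _ => hval_nonneg μ vals j)

omit [DecidableEq I] in
lemma fiber_le (owner : I → B) (S : Finset I) (i : B) :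
    (∑ j ∈ S.filter (fun j => owner j = i), hval μ vals j) ≤ ∑ j ∈ S, hval μ vals j :=
  Finset.sum_le_sum_of_subset_of_nonneg (filter_subset _ _)
    (fun j _ _ => hval_nonneg μ vals j)

lemma phi_nonneg (owner : I → B) (S : Finset I) :
    0 ≤ phi μ vals owner S := by
  unfold phi
  rw [sub_nonneg]
  exact foldmax_le (Finset.sum_nonneg fun j _ => hval_nonneg μ vals j)
    (fun i _ => fiber_le μ vals owner S i)

/-- Key per-part bound. -/
lemma partVal_le (hμ : ∀ j, 0 ≤ μ j)
    (owner : I → B) (howner : ∀ (i : B) (j : I), vals i j ≤ vals (owner j) j)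
    (S : Finset I) :
    partVal μ vals S ≤ (∑ j ∈ S, partVal μ vals {j}) + phi μ vals owner S := by
  have hs0 : 0 ≤ ∑ j ∈ S, partVal μ vals {j} :=
    Finset.sum_nonneg fun j _ => partVal_nonneg μ vals _
  refine secondMax_le (add_nonneg hs0 (phi_nonneg μ vals owner S)) fun i1 i2 hne => ?_
  have hgle : ∀ i : B, (∑ j ∈ S, μ j * vals i j) ≤ (∑ j ∈ S, partVal μ vals {j}) +
      ∑ j ∈ S.filter (fun j => owner j = i), hval μ vals j := by
    intro i
    have hpt : ∀ j ∈ S, μ j * vals i j ≤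
        partVal μ vals {j} + (if owner j = i then hval μ vals j else 0) := by
      intro j _
      by_cases h : owner j = i
      · rw [if_pos h]
        have h1 := term_le_hval μ vals i j
        have h2 := partVal_nonneg μ vals ({j} : Finset I)
        linarith
      · rw [if_neg h, add_zero]
        exact term_le_single μ vals hμ owner howner (fun e => h e.symm)
    calc (∑ j ∈ S, μ j * vals i j)
        ≤ ∑ j ∈ S, (partVal μ vals {j} + (if owner j = i then hval μ vals j else 0)) :=
          Finset.sum_le_sum hpt
      _ = _ := by rw [Finset.sum_add_distrib, Finset.sum_filter]
  set H : B → ℝ := fun i => ∑ j ∈ S.filter (fun j => owner j = i), hval μ vals j with hH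
  have hminH : min (H i1) (H i2) ≤ phi μ vals owner S := by
    unfold phi
    rw [le_sub_iff_add_le, add_comm, ← le_sub_iff_add_le]
    refine foldmax_le ?_ fun i _ => ?_
    · have h1 : H i1 ≤ ∑ j ∈ S, hval μ vals j := fiber_le μ vals owner S i1
      have := min_le_left (H i1) (H i2)
      linarith
    · rw [le_sub_iff_add_le]
      by_cases h : i = i1
      · subst h
        have h2 := two_fibers_le μ vals owner S hne
        have h3 := min_le_right (H i) (H i2)
        simp only [hH] at h2 h3 ⊢
        linarith
      · have h2 := two_fibers_le μ vals owner S h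
        have h3 := min_le_left (H i1) (H i2)
        simp only [hH] at h2 h3 ⊢
        linarith
  calc min (∑ j ∈ S, μ j * vals i1 j) (∑ j ∈ S, μ j * vals i2 j)
      ≤ min ((∑ j ∈ S, partVal μ vals {j}) + H i1)
          ((∑ j ∈ S, partVal μ vals {j}) + H i2) :=
        min_le_min (hgle i1) (hgle i2)
    _ = (∑ j ∈ S, partVal μ vals {j}) + min (H i1) (H i2) := by
        rw [← min_add_add_left]
    _ ≤ _ := by linarith

/-- Superadditivity of φ on pairwise-disjoint collections. -/
lemma sum_phi_le (owner : I → B) (Q : Finset (Finset I))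
    (hdisj : (↑Q : Set (Finset I)).PairwiseDisjoint id) :
    ∑ S ∈ Q, phi μ vals owner S ≤ phi μ vals owner (Q.sup id) := by
  unfold phi
  rw [Finset.sum_sub_distrib, Finset.sup_eq_biUnion, Finset.sum_biUnion hdisj]
  simp only [id]
  gcongr _ - ?_
  refine foldmax_le (Finset.sum_nonneg fun S _ => fold_max_nonneg _ _) fun i _ => ?_
  have key : ∑ j ∈ (Q.biUnion id).filter (fun j => owner j = i), hval μ vals j
      = ∑ S ∈ Q, ∑ j ∈ S.filter (fun j => owner j = i), hval μ vals j := by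
    simp only [Finset.sum_filter, Finset.sum_biUnion hdisj, id]
  rw [key]
  exact Finset.sum_le_sum fun S _ =>
    le_foldmax (f := fun i : B => ∑ j ∈ S.filter (fun j => owner j = i), hval μ vals j)
      (mem_univ i)

end Aux

/-- Upper bound on the optimal revenue for local expert mediators: if `P` is a joint
partition with a (possibly empty) distinguished part `I0` and every other part is
contained in the expertise set of its assigned mediator, then
`R(P) ≤ μ(I0)·v(I0) + Σ_{j ∈ Î} s_j + Σ_t φ(A_t)`, where `Î = ⋃_t I_t`,
`s_j = partVal {j}` and `A_t` is the union of the parts assigned to `t`. -/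
theorem local_experts_optimal_upper_bound {I B M : Type*} [Fintype I] [DecidableEq I]
    [Fintype B] [DecidableEq B] [Fintype M] [DecidableEq M]
    (μ : I → ℝ) (vals : B → I → ℝ)
    (hμ : ∀ j, 0 ≤ μ j) (hv : ∀ i j, 0 ≤ vals i j)
    (Iset : M → Finset I)
    (owner : I → B) (howner : ∀ (i : B) (j : I), vals i j ≤ vals (owner j) j)
    (P : Finset (Finset I)) (hP : IsPartition P)
    (I0 : Finset I) (hI0 : I0 ∈ P)
    (assign : Finset I → M)
    (hassign : ∀ S ∈ P, S ≠ I0 → S ⊆ Iset (assign S)) :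
    revenue μ vals P ≤
      partVal μ vals I0 +
      (∑ j ∈ Finset.univ.sup Iset, partVal μ vals {j}) +
      ∑ t : M, phi μ vals owner
        ((P.filter (fun S => S ≠ I0 ∧ assign S = t)).sup id) := by
  classical
  obtain ⟨hcov, hdisj, hempty⟩ := hP
  set E := P.erase I0 with hE
  have hPsum : revenue μ vals P = partVal μ vals I0 + ∑ S ∈ E, partVal μ vals S := by
    rw [revenue, ← Finset.add_sum_erase _ _ hI0]
  rw [hPsum, add_assoc]
  refine add_le_add le_rfl ?_
  have step1 : ∑ S ∈ E, partVal μ vals S ≤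
      (∑ S ∈ E, ∑ j ∈ S, partVal μ vals {j}) + ∑ S ∈ E, phi μ vals owner S := by
    rw [← Finset.sum_add_distrib]
    exact Finset.sum_le_sum fun S _ => partVal_le μ vals hμ owner howner S
  refine step1.trans (add_le_add ?_ ?_)
  · have hEdisj : (↑E : Set (Finset I)).PairwiseDisjoint id := by
      intro S hS T hT hST
      exact hdisj S (Finset.mem_of_mem_erase hS) T (Finset.mem_of_mem_erase hT) hST
    have hbi : ∑ S ∈ E, ∑ j ∈ S, partVal μ vals {j}
        = ∑ j ∈ E.biUnion id, partVal μ vals {j} := by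
      simpa using (Finset.sum_biUnion (t := id) hEdisj).symm
    rw [hbi]
    refine Finset.sum_le_sum_of_subset_of_nonneg ?_
      (fun j _ _ => partVal_nonneg μ vals {j})
    intro j hj
    simp only [Finset.mem_biUnion, id] at hj
    obtain ⟨S, hS, hjS⟩ := hj
    have hSP := Finset.mem_of_mem_erase hS
    have hSne : S ≠ I0 := Finset.ne_of_mem_erase hS
    exact Finset.le_sup (f := Iset) (mem_univ (assign S)) (hassign S hSP hSne hjS)
  · rw [← Finset.sum_fiberwise_of_maps_to (g := assign)
      (fun S (_ : S ∈ E) => mem_univ (assign S)) (phi μ vals owner)]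
    refine Finset.sum_le_sum fun t _ => ?_
    have hQeq : E.filter (fun S => assign S = t)
        = P.filter (fun S => S ≠ I0 ∧ assign S = t) := by
      ext S
      simp only [hE, Finset.mem_filter, Finset.mem_erase]
      tauto
    rw [hQeq]
    refine sum_phi_le μ vals owner _ ?_
    intro S hS T hT hST
    simp only [Finset.coe_filter, Set.mem_setOf_eq] at hS hT
    exact hdisj S hS.1 T hT.1 hST
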